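/- Let f : ℝ → ℝ be continuously differentiable, let t0 ∈ ℝ, and let y : [t0, ∞) → ℝ be differentiable with y'(t) = f(y(t)) for all t ≥ t0. Assume f(y(t0)) > 0 and that y is bounded on [t0, ∞). Then y is strictly monotone increasing and there exists L ∈ ℝ such that y(t) → L as t → ∞ and f(L) = 0; that is, y converges to a zero of f. -/

import Mathlib

open Set Filter Topology

theorem stmt15 (f : ℝ → ℝ) (hf : ContDiff ℝ 1 f) (t0 : ℝ) (y : ℝ → ℝ)
    (hy : ∀ t, t0 ≤ t → HasDerivWithinAt y (f (y t)) (Set.Ici t0) t)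
    (hpos : 0 < f (y t0)) (hbdd : ∃ C, ∀ t, t0 ≤ t → |y t| ≤ C) :
    StrictMonoOn y (Set.Ici t0) ∧
    ∃ L : ℝ, Filter.Tendsto y Filter.atTop (nhds L) ∧ f L = 0 := by
  obtain ⟨C, hC⟩ := hbdd
  have hycont : ContinuousOn y (Set.Ici t0) := fun t ht => (hy t ht).continuousWithinAt
  have hmem : ∀ t, t0 ≤ t → y t ∈ Set.Icc (-C) C := by
    intro t ht
    have := abs_le.mp (hC t ht)
    exact ⟨this.1, this.2⟩
  -- derivative at interior points
  have hyderiv : ∀ t, t0 < t → HasDerivAt y (f (y t)) t := by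
    intro t ht
    exact (hy t ht.le).hasDerivAt (Ici_mem_nhds ht)
  -- Lipschitz constant of f on Icc (-C) C
  obtain ⟨K, hK⟩ : ∃ K : NNReal, LipschitzOnWith K f (Set.Icc (-C) C) := by
    have hder : Continuous (deriv f) := hf.continuous_deriv le_rfl
    obtain ⟨M, hM⟩ := (isCompact_Icc (a := -C) (b := C)).exists_bound_of_continuousOn
      hder.continuousOn
    refine ⟨⟨max M 0, le_max_right _ _⟩, ?_⟩
    apply (convex_Icc _ _).lipschitzOnWith_of_nnnorm_deriv_le
      (fun x _ => (hf.differentiable one_ne_zero).differentiableAt)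
    intro x hx
    have : ‖deriv f x‖ ≤ max M 0 := (hM x hx).trans (le_max_left _ _)
    exact_mod_cast this
  -- continuity of f ∘ y on Ici t0
  have hfycont : ContinuousOn (fun t => f (y t)) (Set.Ici t0) :=
    hf.continuous.comp_continuousOn hycont
  -- key: f (y t) > 0 for all t ≥ t0
  have key : ∀ t, t0 ≤ t → 0 < f (y t) := by
    by_contra h
    push_neg at h
    obtain ⟨t1, ht1, ht1le⟩ := h
    set S : Set ℝ := {t | t ∈ Set.Icc t0 t1 ∧ f (y t) ≤ 0} with hSdef
    have hS_ne : S.Nonempty := ⟨t1, ⟨ht1, le_rfl⟩, ht1le⟩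
    have hS_bdd : BddBelow S := ⟨t0, fun t ht => ht.1.1⟩
    have hS_closed : IsClosed S := by
      have : S = (Set.Icc t0 t1) ∩ {t ∈ Set.Icc t0 t1 | f (y t) ≤ 0} := by
        ext t; simp [hSdef, Set.mem_setOf_eq]
      rw [this]
      exact isClosed_Icc.inter
        ((hfycont.mono (Set.Icc_subset_Ici_self)).preimage_isClosed_of_isClosed
          isClosed_Icc isClosed_Iic)
    set a := sInf S with ha_def
    have haS : a ∈ S := hS_closed.csInf_mem hS_ne hS_bdd
    have ha0 : t0 ≤ a := haS.1.1
    have hfa_le : f (y a) ≤ 0 := haS.2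
    have ha0' : t0 < a := by
      rcases eq_or_lt_of_le ha0 with h | h
      · exact absurd hfa_le (by rw [← h]; exact not_le.mpr hpos)
      · exact h
    have hpos' : ∀ t ∈ Set.Ico t0 a, 0 < f (y t) := by
      intro t ht
      by_contra hle
      push_neg at hle
      have htS : t ∈ S := ⟨⟨ht.1, ht.2.le.trans haS.1.2⟩, hle⟩
      exact absurd (csInf_le hS_bdd htS) (not_le.2 ht.2)
    have hfa_ge : 0 ≤ f (y a) := by
      have hcw : ContinuousWithinAt (fun t => f (y t)) (Set.Ico t0 a) a :=
        (hfycont a ha0).mono (Set.Ico_subset_Ici_self)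
      haveI hne : (nhdsWithin a (Set.Ico t0 a)).NeBot := by
        rw [← mem_closure_iff_nhdsWithin_neBot, closure_Ico (ne_of_lt ha0')]
        exact ⟨ha0, le_rfl⟩
      exact ge_of_tendsto hcw (eventually_nhdsWithin_of_forall
        (fun t ht => (hpos' t ht).le))
    have hfa : f (y a) = 0 := le_antisymm hfa_le hfa_ge
    -- uniqueness backwards: y equals constant y a on [t0, a]
    have huniq : Set.EqOn y (fun _ => y a) (Set.Icc t0 a) := by
      apply ODE_solution_unique_of_mem_Icc_left (v := fun _ x => f x)
        (s := fun _ => Set.Icc (-C) C) (K := K) (fun _ _ => hK)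
        (hycont.mono Set.Icc_subset_Ici_self)
        (fun t ht => (hyderiv t ht.1).hasDerivWithinAt)
        (fun t ht => hmem t ht.1.le)
        continuousOn_const
        (fun t ht => by
          simpa [hfa] using (hasDerivWithinAt_const t (Set.Iic t) (y a)))
        (fun t ht => hmem a ha0)
        rfl
    have hya : y t0 = y a := huniq ⟨le_rfl, ha0⟩
    rw [hya, hfa] at hpos
    exact lt_irrefl 0 hpos
  -- strict monotonicity
  have hmono : StrictMonoOn y (Set.Ici t0) := by
    apply strictMonoOn_of_deriv_pos (convex_Ici t0) hycont
    intro x hx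
    rw [interior_Ici] at hx
    rw [(hyderiv x hx).deriv]
    exact key x hx.le
  refine ⟨hmono, ?_⟩
  -- limit L
  set L := sSup (y '' Set.Ici t0) with hL_def
  have hne : (y '' Set.Ici t0).Nonempty := ⟨y t0, Set.mem_image_of_mem y Set.self_mem_Ici⟩
  have hbdd' : BddAbove (y '' Set.Ici t0) := by
    refine ⟨C, ?_⟩
    rintro _ ⟨t, ht, rfl⟩
    exact (hmem t ht).2
  have hyleL : ∀ t, t0 ≤ t → y t ≤ L := fun t ht =>
    le_csSup hbdd' ⟨t, ht, rfl⟩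
  have htendsto : Tendsto y atTop (nhds L) := by
    rw [Metric.tendsto_atTop]
    intro ε hε
    obtain ⟨_, ⟨t1, ht1, rfl⟩, hgt⟩ := exists_lt_of_lt_csSup hne (by linarith :
      L - ε < L)
    refine ⟨t1, fun t ht => ?_⟩
    have ht0 : t0 ≤ t := ht1.trans ht
    have h1 : y t1 ≤ y t := hmono.monotoneOn (Set.mem_Ici.mpr ht1) (Set.mem_Ici.mpr ht0) ht
    have h2 : y t ≤ L := hyleL t ht0
    rw [Real.dist_eq, abs_lt]
    constructor <;> linarith
  refine ⟨L, htendsto, ?_⟩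
  -- f L = 0
  have hfL_tendsto : Tendsto (fun t => f (y t)) atTop (nhds (f L)) :=
    (hf.continuous.tendsto L).comp htendsto
  have hfL_ge : 0 ≤ f L :=
    ge_of_tendsto hfL_tendsto (Filter.eventually_atTop.2 ⟨t0, fun t ht => (key t ht).le⟩)
  by_contra hfL_ne
  have hfL_pos : 0 < f L := lt_of_le_of_ne hfL_ge (Ne.symm hfL_ne)
  set c := f L / 2 with hc_def
  have hc_pos : 0 < c := by positivity
  -- continuity of f at L: f x > c near L
  obtain ⟨δ, hδ, hδ'⟩ : ∃ δ > 0, ∀ x, |x - L| < δ → c < f x := by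
    have := Metric.continuousAt_iff.mp (hf.continuous.continuousAt (x := L))
    obtain ⟨δ, hδ, h⟩ := this c hc_pos
    refine ⟨δ, hδ, fun x hx => ?_⟩
    have := h (by rwa [Real.dist_eq] : dist x L < δ)
    rw [Real.dist_eq, abs_lt] at this
    simp only [hc_def] at *
    linarith
  -- choose t1 with y t1 close to L
  obtain ⟨t1', ht1'⟩ := (Metric.tendsto_atTop.mp htendsto) δ hδ
  set t1 := max t1' (t0 + 1) with ht1_def
  have ht1t0 : t0 < t1 := lt_of_lt_of_le (by linarith) (le_max_right _ _)
  have hyt1 : |y t1 - L| < δ := by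
    have := ht1' t1 (le_max_left _ _)
    rwa [Real.dist_eq] at this
  -- for t ≥ t1, deriv y t ≥ c
  have hderiv_ge : ∀ t ∈ interior (Set.Ici t1), c ≤ deriv y t := by
    intro t ht
    rw [interior_Ici] at ht
    have ht0 : t0 < t := ht1t0.trans ht
    rw [(hyderiv t ht0).deriv]
    have h1 : y t1 ≤ y t := hmono.monotoneOn (Set.mem_Ici.mpr ht1t0.le) (Set.mem_Ici.mpr ht0.le) ht.le
    have h2 : y t ≤ L := hyleL t ht0.le
    have h3 : y t1 ≤ L := hyleL t1 ht1t0.le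
    have : |y t - L| < δ := by
      rw [abs_lt]; rw [abs_lt] at hyt1; constructor <;> linarith
    exact (hδ' (y t) this).le
  have hgrow : ∀ t, t1 ≤ t → c * (t - t1) ≤ y t - y t1 := by
    intro t ht
    exact (convex_Ici t1).mul_sub_le_image_sub_of_le_deriv
      (hycont.mono (Set.Ici_subset_Ici.mpr ht1t0.le))
      (fun x hx => by
        rw [interior_Ici] at hx
        exact ((hyderiv x (ht1t0.trans hx)).differentiableAt).differentiableWithinAt)
      hderiv_ge t1 Set.self_mem_Ici t ht ht
  -- contradiction with boundedness
  have hyt1C : y t1 ≤ C := (hmem t1 ht1t0.le).2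
  set T := t1 + (C - y t1 + 1) / c with hT_def
  have hq_pos : 0 < (C - y t1 + 1) / c := div_pos (by linarith) hc_pos
  have hT : t1 ≤ T := by simp only [hT_def]; linarith
  have h1 := hgrow T hT
  have h2 : y T ≤ C := (hmem T (ht1t0.le.trans hT)).2
  have h3 : c * (T - t1) = C - y t1 + 1 := by
    simp only [hT_def]
    field_simp
    ring
  linarith
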